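/- Let A be a commutative ring, let β be a finite order ideal of exponent vectors in ℕⁿ, and let I be an ideal of the polynomial ring A[t_1,...,t_n] such that the quotient A[t_1,...,t_n]/I is a free A-module for which the images of the monomials t^s, s ∈ β, form an A-module basis. Then I is generated, as an ideal, by its elements of total degree at most d(β) + 1. -/

import Mathlib

open MvPolynomial

section Aux
variable {A : Type*} [CommRing A] {n : ℕ} (β : Finset (Fin n →₀ ℕ))
  (I : Ideal (MvPolynomial (Fin n) A)) (b : Module.Basis β A (MvPolynomial (Fin n) A ⧸ I))

/-- The "normal form" remainder: representation of `t^u` mod `I` in the monomial basis. -/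
noncomputable def Rpoly (u : Fin n →₀ ℕ) : MvPolynomial (Fin n) A :=
  ∑ s : β, (b.repr (Ideal.Quotient.mk I (monomial u 1)) s) • monomial s.1 (1 : A)

noncomputable def Npoly (u : Fin n →₀ ℕ) : MvPolynomial (Fin n) A :=
  monomial u 1 - Rpoly β I b u

lemma Rpoly_mem_span (u : Fin n →₀ ℕ) :
    Rpoly β I b u ∈ Submodule.span A (Set.range fun s : β => monomial s.1 (1 : A)) := by
  refine Submodule.sum_mem _ fun s _ => Submodule.smul_mem _ _ ?_
  exact Submodule.subset_span ⟨s, rfl⟩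

lemma mk_Rpoly (hb : ∀ s : β, b s = Ideal.Quotient.mk I (monomial s.1 (1 : A)))
    (u : Fin n →₀ ℕ) :
    Ideal.Quotient.mk I (Rpoly β I b u) = Ideal.Quotient.mk I (monomial u 1) := by
  have : (Ideal.Quotient.mkₐ A I) (Rpoly β I b u) = Ideal.Quotient.mkₐ A I (monomial u 1) := by
    rw [Rpoly, map_sum]
    simp_rw [map_smul, Ideal.Quotient.mkₐ_eq_mk, ← hb]
    exact b.sum_repr _
  simpa using this

lemma Npoly_mem (hb : ∀ s : β, b s = Ideal.Quotient.mk I (monomial s.1 (1 : A)))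
    (u : Fin n →₀ ℕ) : Npoly β I b u ∈ I := by
  rw [← Ideal.Quotient.eq_zero_iff_mem, Npoly, map_sub, mk_Rpoly β I b hb, sub_self]

lemma totalDegree_Rpoly_le (u : Fin n →₀ ℕ) :
    (Rpoly β I b u).totalDegree ≤ β.sup fun s => ∑ i, s i := by
  refine (totalDegree_finset_sum _ _).trans (Finset.sup_le fun s _ => ?_)
  rw [smul_monomial, smul_eq_mul]
  refine (totalDegree_monomial_le _ _).trans ?_
  rw [Finsupp.sum_fintype _ _ (fun _ => rfl)]
  simpa using Finset.le_sup (f := fun s : Fin n →₀ ℕ => ∑ i, s i) s.2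

lemma span_cap_eq_zero (hb : ∀ s : β, b s = Ideal.Quotient.mk I (monomial s.1 (1 : A)))
    (p : MvPolynomial (Fin n) A)
    (hp : p ∈ Submodule.span A (Set.range fun s : β => monomial s.1 (1 : A)))
    (hpI : p ∈ I) : p = 0 := by
  obtain ⟨f, hf⟩ := (Submodule.mem_span_range_iff_exists_fun A).mp hp
  have hmk : (Ideal.Quotient.mkₐ A I) p = 0 := by
    rw [Ideal.Quotient.mkₐ_eq_mk]
    exact (Ideal.Quotient.eq_zero_iff_mem).mpr hpI
  have h0 : ∑ s : β, f s • b s = 0 := by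
    rw [← hf, map_sum] at hmk
    simp_rw [map_smul, Ideal.Quotient.mkₐ_eq_mk, ← hb] at hmk
    exact hmk
  have hf0 : ∀ s, f s = 0 := Fintype.linearIndependent_iff.mp b.linearIndependent f h0
  rw [← hf]
  simp [hf0]
end Aux

theorem stmt2 {A : Type*} [CommRing A] {n : ℕ} (β : Finset (Fin n →₀ ℕ))
    (hdc : ∀ s ∈ β, ∀ t : Fin n →₀ ℕ, t ≤ s → t ∈ β)
    (I : Ideal (MvPolynomial (Fin n) A))
    (b : Module.Basis β A (MvPolynomial (Fin n) A ⧸ I))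
    (hb : ∀ s : β, b s = Ideal.Quotient.mk I (MvPolynomial.monomial s.1 (1 : A))) :
    I = Ideal.span {p : MvPolynomial (Fin n) A |
      p ∈ I ∧ p.totalDegree ≤ β.sup (fun s => ∑ i, s i) + 1} := by
  classical
  set d := β.sup (fun s => ∑ i, s i) with hd
  set J := Ideal.span {p : MvPolynomial (Fin n) A | p ∈ I ∧ p.totalDegree ≤ d + 1} with hJ
  -- low-degree N's are generators
  have hdeg : ∀ u : Fin n →₀ ℕ, (∑ i, u i) ≤ d + 1 → Npoly β I b u ∈ J := by
    intro u hu
    refine Ideal.subset_span ⟨Npoly_mem β I b hb u, ?_⟩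
    rw [Npoly]
    refine (totalDegree_sub _ _).trans (max_le ?_ ((totalDegree_Rpoly_le β I b u).trans (by omega)))
    refine (totalDegree_monomial_le _ _).trans ?_
    rw [Finsupp.sum_fintype _ _ (fun _ => rfl)]
    exact hu
  -- all N's are in J
  have key : ∀ k : ℕ, ∀ u : Fin n →₀ ℕ, (∑ i, u i) ≤ k → Npoly β I b u ∈ J := by
    intro k
    induction k with
    | zero => intro u hu; exact hdeg u (by omega)
    | succ k ih =>
      intro u hu
      by_cases hcase : (∑ i, u i) ≤ d + 1
      · exact hdeg u hcase
      · -- u has large degree; write u = u' + e_i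
        have hpos : (∑ i, u i) ≠ 0 := by omega
        obtain ⟨i, hi, hui⟩ := Finset.exists_ne_zero_of_sum_ne_zero hpos
        set u' := u - Finsupp.single i 1 with hu'
        have husum : u = u' + Finsupp.single i 1 := by
          ext j
          rcases eq_or_ne i j with rfl | hij
          · simp [hu', Finsupp.single_apply]
            omega
          · simp [hu', Finsupp.single_apply, hij]
        have hsum' : (∑ j, u' j) ≤ k := by
          have : ∑ j, u j = (∑ j, u' j) + 1 := by
            rw [husum]
            simp [Finsupp.add_apply, Finset.sum_add_distrib, Finsupp.single_apply]
          omega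
        set c : β → A := fun t => b.repr (Ideal.Quotient.mk I (monomial u' 1)) t with hc
        set q : MvPolynomial (Fin n) A :=
          X i * Npoly β I b u' + ∑ t : β, c t • Npoly β I b (t.1 + Finsupp.single i 1) with hq
        have hqJ : q ∈ J := by
          refine Ideal.add_mem _ (Ideal.mul_mem_left _ _ (ih u' hsum')) (Submodule.sum_mem _ fun t _ => ?_)
          rw [smul_eq_C_mul]
          refine Ideal.mul_mem_left _ _ (hdeg _ ?_)
          have ht : (∑ j, t.1 j) ≤ d := Finset.le_sup (f := fun s : Fin n →₀ ℕ => ∑ i, s i) t.2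
          simp [Finsupp.add_apply, Finset.sum_add_distrib, Finsupp.single_apply]
          omega
        have h1 : X i * monomial u' (1 : A) = monomial u 1 := by
          rw [X, monomial_mul, husum, one_mul, add_comm]
        have h2 : X i * Rpoly β I b u' = ∑ t : β, c t • monomial (t.1 + Finsupp.single i 1) (1 : A) := by
          rw [Rpoly, Finset.mul_sum]
          refine Finset.sum_congr rfl fun t _ => ?_
          rw [mul_smul_comm, X, monomial_mul, one_mul, add_comm]
        have hdiff : Npoly β I b u - q =
            - Rpoly β I b u + ∑ t : β, c t • Rpoly β I b (t.1 + Finsupp.single i 1) := by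
          simp only [hq, Npoly, mul_sub, smul_sub, Finset.sum_sub_distrib, h1, h2]
          ring
        have hdiffM : Npoly β I b u - q ∈
            Submodule.span A (Set.range fun s : β => monomial s.1 (1 : A)) := by
          rw [hdiff]
          exact Submodule.add_mem _ (Submodule.neg_mem _ (Rpoly_mem_span β I b u))
            (Submodule.sum_mem _ fun t _ => Submodule.smul_mem _ _ (Rpoly_mem_span β I b _))
        have hdiffI : Npoly β I b u - q ∈ I := by
          refine Ideal.sub_mem _ (Npoly_mem β I b hb u) ?_
          refine Ideal.add_mem _ (Ideal.mul_mem_left _ _ (Npoly_mem β I b hb u')) ?_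
          refine Submodule.sum_mem _ fun t _ => ?_
          rw [smul_eq_C_mul]
          exact Ideal.mul_mem_left _ _ (Npoly_mem β I b hb _)
        have : Npoly β I b u - q = 0 := span_cap_eq_zero β I b hb _ hdiffM hdiffI
        rw [sub_eq_zero.mp this]; exact hqJ
  -- conclude
  apply le_antisymm
  · intro p hp
    have hrepr : p = ∑ u ∈ p.support, (p.coeff u) • Npoly β I b u +
        ∑ u ∈ p.support, (p.coeff u) • Rpoly β I b u := by
      simp only [Npoly, smul_sub, Finset.sum_sub_distrib]
      rw [sub_add_cancel]
      conv_lhs => rw [p.as_sum]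
      refine Finset.sum_congr rfl fun u _ => ?_
      simp [smul_monomial]
    have hNI : (∑ u ∈ p.support, (p.coeff u) • Npoly β I b u) ∈ I := by
      refine Submodule.sum_mem _ fun u _ => ?_
      rw [smul_eq_C_mul]
      exact Ideal.mul_mem_left _ _ (Npoly_mem β I b hb u)
    have hsub : p - (∑ u ∈ p.support, (p.coeff u) • Npoly β I b u)
        = ∑ u ∈ p.support, (p.coeff u) • Rpoly β I b u := by
      nth_rewrite 1 [hrepr]; ring
    have hRI : (∑ u ∈ p.support, (p.coeff u) • Rpoly β I b u) ∈ I :=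
      hsub ▸ Ideal.sub_mem _ hp hNI
    have hR0 : (∑ u ∈ p.support, (p.coeff u) • Rpoly β I b u) = 0 := by
      refine span_cap_eq_zero β I b hb _ ?_ hRI
      exact Submodule.sum_mem _ fun u _ => Submodule.smul_mem _ _ (Rpoly_mem_span β I b u)
    rw [hrepr, hR0, add_zero]
    refine Submodule.sum_mem _ fun u _ => ?_
    rw [smul_eq_C_mul]
    exact Ideal.mul_mem_left _ _ (key (∑ i, u i) u le_rfl)
  · rw [hJ, Ideal.span_le]
    intro p hp
    exact hp.1
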